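/- Let X, Y, Z be Banach spaces, D : X → Y a Fredholm operator, and L : Z → Y a bounded linear operator. Then: (i) the range of the operator D ⊕ L : X × Z → Y, (x,z) ↦ Dx + Lz, is closed and has finite-dimensional complement in Y; (ii) if D ⊕ L is surjective, then the kernel ker(D ⊕ L) admits a closed complement in X × Z, and the projection P : ker(D ⊕ L) → Z, (x,z) ↦ z, is a Fredholm operator whose kernel is linearly isomorphic to ker(D) and whose cokernel Z/range(P) is linearly isomorphic to Y/range(D); in particular ind(P) = ind(D). -/

import Mathlib

/-- A submodule containing a closed finite-codimensional submodule is closed. -/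
lemma aux_isClosed_of_le {Y : Type*} [NormedAddCommGroup Y] [NormedSpace ℝ Y]
    {W V : Submodule ℝ Y} (hWV : W ≤ V) (hW : IsClosed (W : Set Y))
    (hq : FiniteDimensional ℝ (Y ⧸ W)) : IsClosed (V : Set Y) := by
  haveI := hW
  haveI := hq
  have h1 : V = Submodule.comap W.mkQ (Submodule.map W.mkQ V) := by
    rw [Submodule.comap_map_eq, Submodule.ker_mkQ, sup_eq_left.mpr hWV]
  haveI : FiniteDimensional ℝ (Submodule.map W.mkQ V) :=
    FiniteDimensional.finiteDimensional_submodule _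
  have h2 : IsClosed ((Submodule.map W.mkQ V : Set (Y ⧸ W))) :=
    Submodule.closed_of_finiteDimensional _
  have h3 : Continuous W.mkQ := continuous_quot_mk
  rw [h1]
  exact h2.preimage h3

/-- The sum of a closed submodule and a finite-dimensional submodule is closed. -/
lemma aux_isClosed_sup {Y : Type*} [NormedAddCommGroup Y] [NormedSpace ℝ Y]
    {W F : Submodule ℝ Y} (hW : IsClosed (W : Set Y))
    (hF : FiniteDimensional ℝ F) : IsClosed ((W ⊔ F : Submodule ℝ Y) : Set Y) := by
  haveI := hW
  haveI := hF
  haveI : FiniteDimensional ℝ (Submodule.map W.mkQ F) := Module.Finite.map F W.mkQ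
  have h1 : (W ⊔ F : Submodule ℝ Y) = Submodule.comap W.mkQ (Submodule.map W.mkQ F) := by
    rw [Submodule.comap_map_eq, Submodule.ker_mkQ, sup_comm]
  have h2 : IsClosed ((Submodule.map W.mkQ F : Set (Y ⧸ W))) :=
    Submodule.closed_of_finiteDimensional _
  have h3 : Continuous W.mkQ := continuous_quot_mk
  rw [h1]
  exact h2.preimage h3



/-- A bounded linear operator between normed spaces is *Fredholm* if its kernel is
finite-dimensional, its range is closed, and its cokernel is finite-dimensional. -/
def IsFredholm {X Y : Type*} [NormedAddCommGroup X] [NormedSpace ℝ X]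
    [NormedAddCommGroup Y] [NormedSpace ℝ Y] (T : X →L[ℝ] Y) : Prop :=
  FiniteDimensional ℝ (LinearMap.ker (T : X →ₗ[ℝ] Y)) ∧ IsClosed (LinearMap.range (T : X →ₗ[ℝ] Y) : Set Y) ∧
    FiniteDimensional ℝ (Y ⧸ LinearMap.range (T : X →ₗ[ℝ] Y))

/-- The *Fredholm index* `ind(T) = dim ker(T) − dim coker(T)`. -/
noncomputable def fredholmIndex {X Y : Type*} [NormedAddCommGroup X] [NormedSpace ℝ X]
    [NormedAddCommGroup Y] [NormedSpace ℝ Y] (T : X →L[ℝ] Y) : ℤ :=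
  (Module.finrank ℝ (LinearMap.ker (T : X →ₗ[ℝ] Y)) : ℤ) - (Module.finrank ℝ (Y ⧸ LinearMap.range (T : X →ₗ[ℝ] Y)) : ℤ)

/-- The projection `P : ker(D ⊕ L) → Z`, `(x,z) ↦ z`, onto the second component. -/
noncomputable def kerProjection {X Y Z : Type*}
    [NormedAddCommGroup X] [NormedSpace ℝ X]
    [NormedAddCommGroup Y] [NormedSpace ℝ Y]
    [NormedAddCommGroup Z] [NormedSpace ℝ Z]
    (D : X →L[ℝ] Y) (L : Z →L[ℝ] Y) :
    (LinearMap.ker (D.coprod L : X × Z →ₗ[ℝ] Y)) →L[ℝ] Z :=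
  (ContinuousLinearMap.snd ℝ X Z).comp (LinearMap.ker (D.coprod L : X × Z →ₗ[ℝ] Y)).subtypeL

set_option maxHeartbeats 1000000 in
/-- Let `D : X → Y` be Fredholm and `L : Z → Y` bounded. Then (i) the range of
`D ⊕ L : (x,z) ↦ Dx + Lz` is closed with finite-dimensional complement; (ii) if `D ⊕ L`
is surjective, then `ker(D ⊕ L)` admits a closed complement, and the projection
`P : ker(D ⊕ L) → Z` is Fredholm with `ker P ≅ ker D`, `coker P ≅ coker D`, so
`ind(P) = ind(D)`. -/
theorem coprod_fredholm
    {X Y Z : Type*}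
    [NormedAddCommGroup X] [NormedSpace ℝ X] [CompleteSpace X]
    [NormedAddCommGroup Y] [NormedSpace ℝ Y] [CompleteSpace Y]
    [NormedAddCommGroup Z] [NormedSpace ℝ Z] [CompleteSpace Z]
    (D : X →L[ℝ] Y) (L : Z →L[ℝ] Y)
    (hD : IsFredholm D) :
    (IsClosed (LinearMap.range (D.coprod L : X × Z →ₗ[ℝ] Y) : Set Y) ∧
      FiniteDimensional ℝ (Y ⧸ LinearMap.range (D.coprod L : X × Z →ₗ[ℝ] Y))) ∧
    (Function.Surjective ⇑(D.coprod L) →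
      (∃ U : Submodule ℝ (X × Z), IsClosed (U : Set (X × Z)) ∧
          IsCompl (LinearMap.ker (D.coprod L : X × Z →ₗ[ℝ] Y)) U) ∧
      IsFredholm (kerProjection D L) ∧
      Nonempty ((LinearMap.ker
        (kerProjection D L : LinearMap.ker (D.coprod L : X × Z →ₗ[ℝ] Y) →ₗ[ℝ] Z)) ≃ₗ[ℝ]
        (LinearMap.ker (D : X →ₗ[ℝ] Y))) ∧
      Nonempty ((Z ⧸ LinearMap.range
        (kerProjection D L : LinearMap.ker (D.coprod L : X × Z →ₗ[ℝ] Y) →ₗ[ℝ] Z)) ≃ₗ[ℝ]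
        (Y ⧸ LinearMap.range (D : X →ₗ[ℝ] Y))) ∧
      fredholmIndex (kerProjection D L) = fredholmIndex D) := by
  obtain ⟨hker, hclosed, hcoker⟩ := hD
  have hle : LinearMap.range (D : X →ₗ[ℝ] Y) ≤ LinearMap.range (D.coprod L : X × Z →ₗ[ℝ] Y) := by
    rintro y ⟨x, rfl⟩
    exact ⟨(x, 0), by simp⟩
  have hmem : ∀ v : X × Z, v ∈ LinearMap.ker (D.coprod L : X × Z →ₗ[ℝ] Y) ↔ D v.1 + L v.2 = 0 := by
    intro v
    simp [LinearMap.mem_ker]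
  constructor
  · refine ⟨aux_isClosed_of_le hle hclosed hcoker, ?_⟩
    have hsurj : Function.Surjective
        (Submodule.mapQ (LinearMap.range (D : X →ₗ[ℝ] Y)) (LinearMap.range (D.coprod L : X × Z →ₗ[ℝ] Y)) LinearMap.id
          (by simpa using hle)) := by
      intro q
      obtain ⟨y, rfl⟩ := Submodule.Quotient.mk_surjective _ q
      exact ⟨Submodule.Quotient.mk y, by simp [Submodule.mapQ_apply]⟩
    exact Module.Finite.of_surjective _ hsurj
  intro hs
  -- kernel of the projection P
  have hz0 : ∀ u : LinearMap.ker (kerProjection D L : LinearMap.ker (D.coprod L : X × Z →ₗ[ℝ] Y) →ₗ[ℝ] Z),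
      ((u : LinearMap.ker (D.coprod L : X × Z →ₗ[ℝ] Y)) : X × Z).2 = 0 := fun u => LinearMap.mem_ker.mp u.2
  let e : (LinearMap.ker (kerProjection D L : LinearMap.ker (D.coprod L : X × Z →ₗ[ℝ] Y) →ₗ[ℝ] Z)) ≃ₗ[ℝ] LinearMap.ker (D : X →ₗ[ℝ] Y) :=
    { toFun := fun u => ⟨((u : LinearMap.ker (D.coprod L : X × Z →ₗ[ℝ] Y)) : X × Z).1, by
        have h1 := (hmem _).mp (u : LinearMap.ker (D.coprod L : X × Z →ₗ[ℝ] Y)).2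
        rw [hz0 u, map_zero, add_zero] at h1
        exact LinearMap.mem_ker.mpr h1⟩
      map_add' := fun u v => rfl
      map_smul' := fun c u => rfl
      invFun := fun x => ⟨⟨((x : X), 0), (hmem _).mpr (by
        simp [LinearMap.mem_ker.mp x.2])⟩, LinearMap.mem_ker.mpr rfl⟩
      left_inv := fun u => Subtype.ext (Subtype.ext (Prod.ext rfl (hz0 u).symm))
      right_inv := fun x => Subtype.ext rfl }
  -- range of the projection P
  have hrange : LinearMap.range (kerProjection D L : LinearMap.ker (D.coprod L : X × Z →ₗ[ℝ] Y) →ₗ[ℝ] Z)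
      = Submodule.comap (L : Z →ₗ[ℝ] Y) (LinearMap.range (D : X →ₗ[ℝ] Y)) := by
    ext z
    constructor
    · rintro ⟨u, rfl⟩
      have h1 := (hmem _).mp (u : LinearMap.ker (D.coprod L : X × Z →ₗ[ℝ] Y)).2
      refine Submodule.mem_comap.mpr ⟨-((u : LinearMap.ker (D.coprod L : X × Z →ₗ[ℝ] Y)) : X × Z).1, ?_⟩
      rw [map_neg]
      exact neg_eq_of_add_eq_zero_right h1
    · intro h
      obtain ⟨x, hx⟩ := Submodule.mem_comap.mp h
      exact ⟨⟨(-x, z), (hmem _).mpr (by simp at hx; simp [hx])⟩, rfl⟩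
  have hPclosed : IsClosed (LinearMap.range (kerProjection D L : LinearMap.ker (D.coprod L : X × Z →ₗ[ℝ] Y) →ₗ[ℝ] Z) : Set Z) := by
    rw [hrange]
    exact hclosed.preimage L.continuous
  -- cokernel of the projection P
  let φ : Z →ₗ[ℝ] Y ⧸ LinearMap.range (D : X →ₗ[ℝ] Y) := (LinearMap.range (D : X →ₗ[ℝ] Y)).mkQ.comp (L : Z →ₗ[ℝ] Y)
  have hkerφ : LinearMap.range (kerProjection D L : LinearMap.ker (D.coprod L : X × Z →ₗ[ℝ] Y) →ₗ[ℝ] Z) = LinearMap.ker φ := by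
    rw [hrange]
    ext z
    simp [φ, LinearMap.mem_ker, Submodule.Quotient.mk_eq_zero]
  have hφsurj : Function.Surjective φ := by
    intro q
    obtain ⟨y, rfl⟩ := Submodule.Quotient.mk_surjective _ q
    obtain ⟨⟨x, z⟩, hxz⟩ := hs y
    have hxz' : D x + L z = y := by simpa using hxz
    refine ⟨z, ?_⟩
    have h1 : φ z = Submodule.Quotient.mk (L z) := rfl
    rw [h1, Submodule.Quotient.eq]
    exact ⟨-x, by rw [map_neg, ← hxz']; abel⟩
  let eq2 : (Z ⧸ LinearMap.range (kerProjection D L : LinearMap.ker (D.coprod L : X × Z →ₗ[ℝ] Y) →ₗ[ℝ] Z)) ≃ₗ[ℝ] (Y ⧸ LinearMap.range (D : X →ₗ[ℝ] Y)) :=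
    (Submodule.quotEquivOfEq _ _ hkerφ).trans (φ.quotKerEquivOfSurjective hφsurj)
  haveI hfk : FiniteDimensional ℝ (LinearMap.ker (kerProjection D L : LinearMap.ker (D.coprod L : X × Z →ₗ[ℝ] Y) →ₗ[ℝ] Z)) :=
    LinearEquiv.finiteDimensional e.symm
  haveI hfc : FiniteDimensional ℝ (Z ⧸ LinearMap.range (kerProjection D L : LinearMap.ker (D.coprod L : X × Z →ₗ[ℝ] Y) →ₗ[ℝ] Z)) :=
    LinearEquiv.finiteDimensional eq2.symm
  -- the closed complement
  obtain ⟨X₀, hX₀c, hX₀⟩ :=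
    (Submodule.ClosedComplemented.of_finiteDimensional (LinearMap.ker (D : X →ₗ[ℝ] Y))).exists_isClosed_isCompl
  obtain ⟨C, hCc, hC⟩ :=
    (Submodule.ClosedComplemented.of_quotient_finiteDimensional hclosed).exists_isClosed_isCompl
  haveI : FiniteDimensional ℝ C :=
    LinearEquiv.finiteDimensional ((LinearMap.range (D : X →ₗ[ℝ] Y)).quotientEquivOfIsCompl C hC)
  obtain ⟨g, hg⟩ := ((D.coprod L : X × Z →ₗ[ℝ] Y)).exists_rightInverse_of_surjective
    (by rw [LinearMap.range_eq_top]; exact hs)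
  have hgapp : ∀ y : Y, (D.coprod L) (g y) = y := fun y => LinearMap.congr_fun hg y
  refine ⟨⟨(X₀.prod (⊥ : Submodule ℝ Z)) ⊔ Submodule.map g C, ?_, ?_, ?_⟩,
    ⟨hfk, hPclosed, hfc⟩, ⟨e⟩, ⟨eq2⟩, ?_⟩
  · -- closedness of U
    refine aux_isClosed_sup ?_ (Module.Finite.map C g)
    rw [Submodule.prod_coe, Submodule.bot_coe]
    exact hX₀c.prod isClosed_singleton
  · -- disjointness
    rw [Submodule.disjoint_def]
    intro v hvK hvU
    obtain ⟨w, hw, f, hf, rfl⟩ := Submodule.mem_sup.mp hvU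
    obtain ⟨c, hcC, rfl⟩ := Submodule.mem_map.mp hf
    obtain ⟨hw1, hw2⟩ := Submodule.mem_prod.mp hw
    have hw2' : w.2 = (0 : Z) := hw2
    have h2 : (D.coprod L) (w + g c) = D w.1 + c := by
      rw [map_add, hgapp]
      simp [hw2']
    have hsum : D w.1 + c = 0 := by
      rw [← h2]
      exact LinearMap.mem_ker.mp hvK
    have hc0 : c = 0 := by
      refine (Submodule.disjoint_def.mp hC.disjoint) c ⟨-w.1, ?_⟩ hcC
      rw [map_neg]
      exact neg_eq_of_add_eq_zero_right hsum
    have hw10 : w.1 = 0 := by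
      refine (Submodule.disjoint_def.mp hX₀.disjoint) w.1 (LinearMap.mem_ker.mpr ?_) hw1
      rw [hc0, add_zero] at hsum
      exact hsum
    have hw0 : w = 0 := Prod.ext hw10 hw2'
    rw [hw0, hc0, map_zero, add_zero]
  · -- codisjointness
    rw [codisjoint_iff, Submodule.eq_top_iff']
    intro v
    have h1 : (D.coprod L) v ∈ (LinearMap.range (D : X →ₗ[ℝ] Y)) ⊔ C := by
      rw [codisjoint_iff.mp hC.codisjoint]
      trivial
    obtain ⟨yd, hyd, c, hcC, hsum⟩ := Submodule.mem_sup.mp h1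
    obtain ⟨a, rfl⟩ := hyd
    have h2 : a ∈ (LinearMap.ker (D : X →ₗ[ℝ] Y)) ⊔ X₀ := by
      rw [codisjoint_iff.mp hX₀.codisjoint]
      trivial
    obtain ⟨k, hk, x₀, hx₀, hkx⟩ := Submodule.mem_sup.mp h2
    refine Submodule.mem_sup.mpr ⟨v - ((x₀, 0) + g c), ?_, (x₀, 0) + g c, ?_, by abel⟩
    · refine (hmem _).mpr ?_
      have hTu : (D.coprod L) ((x₀, (0 : Z)) + g c) = D a + c := by
        rw [map_add, hgapp]
        have hDa : D a = D x₀ := by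
          rw [← hkx, map_add, show D k = 0 from LinearMap.mem_ker.mp hk, zero_add]
        simp [hDa]
      have h3 : D (v - ((x₀, 0) + g c)).1 + L (v - ((x₀, 0) + g c)).2
          = (D.coprod L) v - (D.coprod L) ((x₀, (0 : Z)) + g c) := by
        rw [← ContinuousLinearMap.coprod_apply, map_sub]
      rw [h3, hTu, show D a + c = (D.coprod L) v from hsum, sub_self]
    · exact Submodule.add_mem_sup (Submodule.mem_prod.mpr ⟨hx₀, Submodule.zero_mem _⟩)
        (Submodule.mem_map_of_mem hcC)
  · -- index
    unfold fredholmIndex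
    rw [e.finrank_eq, eq2.finrank_eq]
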